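/- arXiv:1208.4836 — 6 statements merged into one kernel-verified Lean document; each statement's English description precedes it below -/
import Mathlib

section
/- Let v₁, v₂, v₃, v₄ ∈ ℝ⁴ satisfy ⟨vᵢ, vᵢ⟩ = 1 for each i and ⟨vᵢ, vⱼ⟩ = −1 for all i ≠ j, where ⟨·,·⟩ is the Minkowski inner product. Then the first coordinates bᵢ = (vᵢ)₀ satisfy the Descartes relation 2(b₁² + b₂² + b₃² + b₄²) = (b₁ + b₂ + b₃ + b₄)². -/
/-- The Minkowski inner product on `ℝ⁴` in the isotropic basis:
`⟨v,w⟩ = −(v₀w₁ + v₁w₀)/2 + v₂w₂ + v₃w₃`. -/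
noncomputable def minkowskiInner (v w : Fin 4 → ℝ) : ℝ :=
  -(v 0 * w 1 + v 1 * w 0) / 2 + v 2 * w 2 + v 3 * w 3

/-- If four vectors of Minkowski space have norm `1` and pairwise inner products `−1`,
then their first coordinates satisfy the Descartes quadratic relation. -/
theorem descartes_from_minkowski (v : Fin 4 → Fin 4 → ℝ)
    (hnorm : ∀ i, minkowskiInner (v i) (v i) = 1)
    (hpair : ∀ i j, i ≠ j → minkowskiInner (v i) (v j) = -1) :
    2 * ((v 0 0) ^ 2 + (v 1 0) ^ 2 + (v 2 0) ^ 2 + (v 3 0) ^ 2) =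
      (v 0 0 + v 1 0 + v 2 0 + v 3 0) ^ 2 := by
  -- the isotropic vector picking out the first coordinate
  have hli : LinearIndependent ℝ v := by
    rw [Fintype.linearIndependent_iff]
    intro g hg
    have hk : ∀ k, g 0 * v 0 k + g 1 * v 1 k + g 2 * v 2 k + g 3 * v 3 k = 0 := by
      intro k
      have := congrFun hg k
      simpa [Fin.sum_univ_four, mul_comm] using this
    have key : ∀ j, g 0 * minkowskiInner (v 0) (v j) + g 1 * minkowskiInner (v 1) (v j)
        + g 2 * minkowskiInner (v 2) (v j) + g 3 * minkowskiInner (v 3) (v j) = 0 := by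
      intro j
      simp only [minkowskiInner]
      linear_combination (-(v j 1)/2) * hk 0 + (-(v j 0)/2) * hk 1 + (v j 2) * hk 2
        + (v j 3) * hk 3
    have k0 := key 0
    have k1 := key 1
    have k2 := key 2
    have k3 := key 3
    rw [hnorm 0, hpair 1 0 (by decide), hpair 2 0 (by decide), hpair 3 0 (by decide)] at k0
    rw [hpair 0 1 (by decide), hnorm 1, hpair 2 1 (by decide), hpair 3 1 (by decide)] at k1
    rw [hpair 0 2 (by decide), hpair 1 2 (by decide), hnorm 2, hpair 3 2 (by decide)] at k2
    rw [hpair 0 3 (by decide), hpair 1 3 (by decide), hpair 2 3 (by decide), hnorm 3] at k3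
    have h0 : g 0 = 0 := by linarith
    have h1 : g 1 = 0 := by linarith
    have h2 : g 2 = 0 := by linarith
    have h3 : g 3 = 0 := by linarith
    intro i
    fin_cases i <;> assumption
  have hcard : Fintype.card (Fin 4) = Module.finrank ℝ (Fin 4 → ℝ) := by simp
  let b := basisOfLinearIndependentOfCardEqFinrank hli hcard
  have hb : ∀ i, b i = v i := fun i => by
    simp [b, coe_basisOfLinearIndependentOfCardEqFinrank]
  set w : Fin 4 → ℝ := fun k => if k = 1 then 1 else 0 with hw
  set c : Fin 4 → ℝ := fun i => b.repr w i with hc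
  have hsum : c 0 • v 0 + c 1 • v 1 + c 2 • v 2 + c 3 • v 3 = w := by
    have := b.sum_repr w
    rw [Fin.sum_univ_four] at this
    simpa [hb, hc] using this
  have hk : ∀ k, c 0 * v 0 k + c 1 * v 1 k + c 2 * v 2 k + c 3 * v 3 k = w k := by
    intro k
    have := congrFun hsum k
    simpa using this
  have hk0 : c 0 * v 0 0 + c 1 * v 1 0 + c 2 * v 2 0 + c 3 * v 3 0 = 0 := by
    simpa [hw] using hk 0
  have hk1 : c 0 * v 0 1 + c 1 * v 1 1 + c 2 * v 2 1 + c 3 * v 3 1 = 1 := by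
    simpa [hw] using hk 1
  have hk2 : c 0 * v 0 2 + c 1 * v 1 2 + c 2 * v 2 2 + c 3 * v 3 2 = 0 := by
    simpa [hw] using hk 2
  have hk3 : c 0 * v 0 3 + c 1 * v 1 3 + c 2 * v 2 3 + c 3 * v 3 3 = 0 := by
    simpa [hw] using hk 3
  have key : ∀ j, c 0 * minkowskiInner (v 0) (v j) + c 1 * minkowskiInner (v 1) (v j)
      + c 2 * minkowskiInner (v 2) (v j) + c 3 * minkowskiInner (v 3) (v j) = -(v j 0)/2 := by
    intro j
    simp only [minkowskiInner]
    linear_combination (-(v j 1)/2) * hk0 + (-(v j 0)/2) * hk1 + (v j 2) * hk2 + (v j 3) * hk3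
  have r0 := key 0
  have r1 := key 1
  have r2 := key 2
  have r3 := key 3
  rw [hnorm 0, hpair 1 0 (by decide), hpair 2 0 (by decide), hpair 3 0 (by decide)] at r0
  rw [hpair 0 1 (by decide), hnorm 1, hpair 2 1 (by decide), hpair 3 1 (by decide)] at r1
  rw [hpair 0 2 (by decide), hpair 1 2 (by decide), hnorm 2, hpair 3 2 (by decide)] at r2
  rw [hpair 0 3 (by decide), hpair 1 3 (by decide), hpair 2 3 (by decide), hnorm 3] at r3
  have e0 : v 0 0 = 2 * (c 0 + c 1 + c 2 + c 3) - 4 * c 0 := by linarith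
  have e1 : v 1 0 = 2 * (c 0 + c 1 + c 2 + c 3) - 4 * c 1 := by linarith
  have e2 : v 2 0 = 2 * (c 0 + c 1 + c 2 + c 3) - 4 * c 2 := by linarith
  have e3 : v 3 0 = 2 * (c 0 + c 1 + c 2 + c 3) - 4 * c 3 := by linarith
  rw [e0, e1, e2, e3] at hk0 ⊢
  linear_combination (-8 : ℝ) * hk0
end

section
/- Let four circles in the complex plane have centres z₁, z₂, z₃, z₄ ∈ ℂ and radii r₁, r₂, r₃, r₄ > 0, and suppose they are pairwise externally tangent, i.e. |zᵢ − zⱼ| = rᵢ + rⱼ for all i ≠ j. Then their curvatures kᵢ = 1/rᵢ satisfy the Descartes circle relation 2(k₁² + k₂² + k₃² + k₄²) = (k₁ + k₂ + k₃ + k₄)². -/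
private lemma descartes_poly (x1 x2 x3 x4 y1 y2 y3 y4 r1 r2 r3 r4 : ℝ)
    (h12 : (x1-x2)^2 + (y1-y2)^2 = (r1+r2)^2)
    (h13 : (x1-x3)^2 + (y1-y3)^2 = (r1+r3)^2)
    (h14 : (x1-x4)^2 + (y1-y4)^2 = (r1+r4)^2)
    (h23 : (x2-x3)^2 + (y2-y3)^2 = (r2+r3)^2)
    (h24 : (x2-x4)^2 + (y2-y4)^2 = (r2+r4)^2)
    (h34 : (x3-x4)^2 + (y3-y4)^2 = (r3+r4)^2) :
    2 * ((r2*r3*r4)^2 + (r1*r3*r4)^2 + (r1*r2*r4)^2 + (r1*r2*r3)^2) =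
      (r2*r3*r4 + r1*r3*r4 + r1*r2*r4 + r1*r2*r3)^2 := by
  linear_combination ((1/16)*y2^2*y4^2 + (-1/8)*y2^2*y3*y4 + (1/16)*y2^2*y3^2 + (-1/8)*y1*y2*y4^2 + (1/4)*y1*y2*y3*y4 + (-1/8)*y1*y2*y3^2 + (1/16)*y1^2*y4^2 + (-1/8)*y1^2*y3*y4 + (1/16)*y1^2*y3^2 + (1/4)*x4^2*y3^2 + (-1/4)*x4^2*y2*y3 + (1/16)*x4^2*y2^2 + (-1/4)*x4^2*y1*y3 + (1/8)*x4^2*y1*y2 + (1/16)*x4^2*y1^2 + (-1/2)*x3*x4*y3*y4 + (1/4)*x3*x4*y2*y4 + (1/4)*x3*x4*y2*y3 + (-1/8)*x3*x4*y2^2 + (1/4)*x3*x4*y1*y4 + (1/4)*x3*x4*y1*y3 + (-1/4)*x3*x4*y1*y2 + (-1/8)*x3*x4*y1^2 + (1/4)*x3^2*y4^2 + (-1/4)*x3^2*y2*y4 + (1/16)*x3^2*y2^2 + (-1/4)*x3^2*y1*y4 + (1/8)*x3^2*y1*y2 + (1/16)*x3^2*y1^2 + (1/4)*x2*x4*y3*y4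 + (-1/4)*x2*x4*y3^2 + (-1/4)*x2*x4*y1*y4 + (1/4)*x2*x4*y1*y3 + (-1/4)*x2*x3*y4^2 + (1/4)*x2*x3*y3*y4 + (1/4)*x2*x3*y1*y4 + (-1/4)*x2*x3*y1*y3 + (1/16)*x2^2*y4^2 + (-1/8)*x2^2*y3*y4 + (1/16)*x2^2*y3^2 + (1/16)*x2^2*x4^2 + (-1/8)*x2^2*x3*x4 + (1/16)*x2^2*x3^2 + (1/4)*x1*x4*y3*y4 + (-1/4)*x1*x4*y3^2 + (-1/4)*x1*x4*y2*y4 + (1/4)*x1*x4*y2*y3 + (-1/4)*x1*x3*y4^2 + (1/4)*x1*x3*y3*y4 + (1/4)*x1*x3*y2*y4 + (-1/4)*x1*x3*y2*y3 + (1/8)*x1*x2*y4^2 + (-1/4)*x1*x2*y3*y4 + (1/8)*x1*x2*y3^2 + (-1/8)*x1*x2*x4^2 + (1/4)*x1*x2*x3*x4 + (-1/8)*x1*x2*x3^2 + (1/16)*x1^2*y4^2 + (-1/8)*x1^2*y3*y4 + (1/16)*x1^2*y3^2 + (1/16)*x1^2*x4^2 + (-1/8)*x1^2*x3*x4 + (1/16)*x1^2*x3^2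 + (-1/16)*r2^2*y4^2 + (1/8)*r2^2*y3*y4 + (-1/16)*r2^2*y3^2 + (-1/16)*r2^2*x4^2 + (1/8)*r2^2*x3*x4 + (-1/16)*r2^2*x3^2 + (-1/8)*r1*r2*y4^2 + (1/4)*r1*r2*y3*y4 + (-1/8)*r1*r2*y3^2 + (-1/8)*r1*r2*x4^2 + (1/4)*r1*r2*x3*x4 + (-1/8)*r1*r2*x3^2 + (-1/16)*r1^2*y4^2 + (1/8)*r1^2*y3*y4 + (-1/16)*r1^2*y3^2 + (-1/16)*r1^2*x4^2 + (1/8)*r1^2*x3*x4 + (-1/16)*r1^2*x3^2) * h12 + ((1/16)*y3^2*y4^2 + (-1/8)*y2*y3^2*y4 + (-1/8)*y2^2*y4^2 + (1/8)*y2^2*y3*y4 + (1/16)*y2^2*y3^2 + (1/8)*y2^3*y4 + (-1/8)*y2^3*y3 + (-1/8)*y1*y3*y4^2 + (1/4)*y1*y2*y4^2 + (-1/4)*y1*y2^2*y4 + (1/8)*y1*y2^2*y3 + (-1/16)*y1^2*y4^2 + (1/8)*y1^2*y3*y4 + (-1/8)*y1^2*y2*y3 + (1/16)*y1^2*y2^2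 + (1/16)*x4^2*y3^2 + (-1/4)*x4^2*y2*y3 + (1/8)*x4^2*y2^2 + (1/8)*x4^2*y1*y3 + (-1/16)*x4^2*y1^2 + (1/4)*x3*x4*y2*y4 + (-1/8)*x3*x4*y2^2 + (-1/4)*x3*x4*y1*y4 + (1/8)*x3*x4*y1^2 + (1/16)*x3^2*y4^2 + (-1/8)*x3^2*y2*y4 + (1/16)*x3^2*y2^2 + (1/16)*x3^2*x4^2 + (1/4)*x2*x4*y3*y4 + (-1/8)*x2*x4*y3^2 + (-1/2)*x2*x4*y2*y4 + (1/4)*x2*x4*y2*y3 + (1/8)*x2*x4*y2^2 + (1/4)*x2*x4*y1*y4 + (-1/4)*x2*x4*y1*y3 + (-1/4)*x2*x3*y4^2 + (1/4)*x2*x3*y2*y4 + (-1/8)*x2*x3*y2^2 + (1/4)*x2*x3*y1*y4 + (-1/8)*x2*x3*y1^2 + (-1/8)*x2*x3^2*x4 + (1/8)*x2^2*y4^2 + (-1/8)*x2^2*y3*y4 + (1/16)*x2^2*y3^2 + (1/8)*x2^2*y2*y4 + (-1/8)*x2^2*y2*y3 + (-1/4)*x2^2*y1*y4 + (1/8)*x2^2*y1*y3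 + (1/16)*x2^2*y1^2 + (-1/8)*x2^2*x4^2 + (1/8)*x2^2*x3*x4 + (1/16)*x2^2*x3^2 + (1/8)*x2^3*x4 + (-1/8)*x2^3*x3 + (-1/4)*x1*x4*y3*y4 + (1/4)*x1*x4*y2*y4 + (1/4)*x1*x4*y2*y3 + (-1/4)*x1*x4*y2^2 + (1/8)*x1*x3*y4^2 + (-1/4)*x1*x3*y2*y4 + (1/8)*x1*x3*y2^2 + (-1/8)*x1*x3*x4^2 + (1/4)*x1*x2*x4^2 + (-1/4)*x1*x2^2*x4 + (1/8)*x1*x2^2*x3 + (-1/16)*x1^2*y4^2 + (1/8)*x1^2*y3*y4 + (-1/8)*x1^2*y2*y3 + (1/16)*x1^2*y2^2 + (-1/16)*x1^2*x4^2 + (1/8)*x1^2*x3*x4 + (-1/8)*x1^2*x2*x3 + (1/16)*x1^2*x2^2 + (-1/16)*r3^2*y4^2 + (1/8)*r3^2*y2*y4 + (-1/16)*r3^2*y2^2 + (-1/16)*r3^2*x4^2 + (1/8)*r3^2*x2*x4 + (-1/16)*r3^2*x2^2 + (1/8)*r2^2*y4^2 + (-1/8)*r2^2*y3*y4 + (-1/8)*r2^2*y2*y4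 + (1/8)*r2^2*y2*y3 + (1/8)*r2^2*x4^2 + (-1/8)*r2^2*x3*x4 + (-1/8)*r2^2*x2*x4 + (1/8)*r2^2*x2*x3 + (-1/8)*r1*r3*y4^2 + (1/4)*r1*r3*y2*y4 + (-1/8)*r1*r3*y2^2 + (-1/8)*r1*r3*x4^2 + (1/4)*r1*r3*x2*x4 + (-1/8)*r1*r3*x2^2 + (1/4)*r1*r2*y4^2 + (-1/4)*r1*r2*y3*y4 + (-1/4)*r1*r2*y2*y4 + (1/4)*r1*r2*y2*y3 + (1/4)*r1*r2*x4^2 + (-1/4)*r1*r2*x3*x4 + (-1/4)*r1*r2*x2*x4 + (1/4)*r1*r2*x2*x3 + (1/16)*r1^2*y4^2 + (-1/8)*r1^2*y3*y4 + (1/8)*r1^2*y2*y3 + (-1/16)*r1^2*y2^2 + (1/16)*r1^2*x4^2 + (-1/8)*r1^2*x3*x4 + (1/8)*r1^2*x2*x3 + (-1/16)*r1^2*x2^2) * h13 + ((1/16)*y3^2*y4^2 + (-1/8)*y3^3*y4 + (-1/8)*y2*y3*y4^2 + (1/8)*y2*y3^2*y4 + (1/8)*y2*y3^3 + (1/16)*y2^2*y4^2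 + (1/8)*y2^2*y3*y4 + (-1/4)*y2^2*y3^2 + (-1/8)*y2^3*y4 + (1/8)*y2^3*y3 + (1/8)*y1*y3^2*y4 + (-1/4)*y1*y2*y3*y4 + (1/8)*y1*y2^2*y4 + (-1/16)*y1^2*y3^2 + (1/8)*y1^2*y2*y3 + (-1/16)*y1^2*y2^2 + (1/16)*x4^2*y3^2 + (-1/8)*x4^2*y2*y3 + (1/16)*x4^2*y2^2 + (-1/8)*x3*x4*y3^2 + (1/4)*x3*x4*y2*y3 + (-1/8)*x3*x4*y2^2 + (1/16)*x3^2*y4^2 + (-1/8)*x3^2*y3*y4 + (-1/8)*x3^2*y2*y4 + (1/8)*x3^2*y2*y3 + (1/8)*x3^2*y1*y4 + (-1/16)*x3^2*y1^2 + (1/16)*x3^2*x4^2 + (-1/8)*x3^3*x4 + (-1/8)*x2*x4*y3^2 + (1/4)*x2*x4*y2*y3 + (-1/8)*x2*x4*y2^2 + (-1/8)*x2*x3*y4^2 + (1/4)*x2*x3*y3*y4 + (1/8)*x2*x3*y3^2 + (1/4)*x2*x3*y2*y4 + (-1/2)*x2*x3*y2*y3 + (1/8)*x2*x3*y2^2 +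 (-1/4)*x2*x3*y1*y4 + (1/8)*x2*x3*y1^2 + (-1/8)*x2*x3*x4^2 + (1/8)*x2*x3^2*x4 + (1/8)*x2*x3^3 + (1/16)*x2^2*y4^2 + (-1/8)*x2^2*y3*y4 + (-1/8)*x2^2*y2*y4 + (1/8)*x2^2*y2*y3 + (1/8)*x2^2*y1*y4 + (-1/16)*x2^2*y1^2 + (1/16)*x2^2*x4^2 + (1/8)*x2^2*x3*x4 + (-1/4)*x2^2*x3^2 + (-1/8)*x2^3*x4 + (1/8)*x2^3*x3 + (1/8)*x1*x4*y3^2 + (-1/4)*x1*x4*y2*y3 + (1/8)*x1*x4*y2^2 + (1/8)*x1*x3^2*x4 + (-1/4)*x1*x2*x3*x4 + (1/8)*x1*x2^2*x4 + (-1/16)*x1^2*y3^2 + (1/8)*x1^2*y2*y3 + (-1/16)*x1^2*y2^2 + (-1/16)*x1^2*x3^2 + (1/8)*x1^2*x2*x3 + (-1/16)*x1^2*x2^2 + (-1/16)*r4^2*y3^2 + (1/8)*r4^2*y2*y3 + (-1/16)*r4^2*y2^2 + (-1/16)*r4^2*x3^2 + (1/8)*r4^2*x2*x3 + (-1/16)*r4^2*x2^2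 + (1/8)*r3^2*y3*y4 + (-1/8)*r3^2*y2*y4 + (-1/8)*r3^2*y2*y3 + (1/8)*r3^2*y2^2 + (1/8)*r3^2*x3*x4 + (-1/8)*r3^2*x2*x4 + (-1/8)*r3^2*x2*x3 + (1/8)*r3^2*x2^2 + (-1/8)*r2^2*y3*y4 + (1/8)*r2^2*y3^2 + (1/8)*r2^2*y2*y4 + (-1/8)*r2^2*y2*y3 + (-1/8)*r2^2*x3*x4 + (1/8)*r2^2*x3^2 + (1/8)*r2^2*x2*x4 + (-1/8)*r2^2*x2*x3 + (-1/8)*r1*r4*y3^2 + (1/4)*r1*r4*y2*y3 + (-1/8)*r1*r4*y2^2 + (-1/8)*r1*r4*x3^2 + (1/4)*r1*r4*x2*x3 + (-1/8)*r1*r4*x2^2 + (1/4)*r1*r3*y3*y4 + (-1/4)*r1*r3*y2*y4 + (-1/4)*r1*r3*y2*y3 + (1/4)*r1*r3*y2^2 + (1/4)*r1*r3*x3*x4 + (-1/4)*r1*r3*x2*x4 + (-1/4)*r1*r3*x2*x3 + (1/4)*r1*r3*x2^2 + (-1/4)*r1*r2*y3*y4 + (1/4)*r1*r2*y3^2 +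 (1/4)*r1*r2*y2*y4 + (-1/4)*r1*r2*y2*y3 + (-1/4)*r1*r2*x3*x4 + (1/4)*r1*r2*x3^2 + (1/4)*r1*r2*x2*x4 + (-1/4)*r1*r2*x2*x3 + (1/16)*r1^2*y3^2 + (-1/8)*r1^2*y2*y3 + (1/16)*r1^2*y2^2 + (1/16)*r1^2*x3^2 + (-1/8)*r1^2*x2*x3 + (1/16)*r1^2*x2^2) * h14 + ((-1/16)*y4^4 + (1/8)*y3*y4^3 + (-1/16)*y3^2*y4^2 + (1/8)*y2*y4^3 + (-1/4)*y2*y3*y4^2 + (1/8)*y2*y3^2*y4 + (-1/16)*y2^2*y4^2 + (1/8)*y2^2*y3*y4 + (-1/16)*y2^2*y3^2 + (-1/8)*x4^2*y4^2 + (1/8)*x4^2*y3*y4 + (-1/16)*x4^2*y3^2 + (1/8)*x4^2*y2*y4 + (-1/16)*x4^2*y2^2 + (-1/16)*x4^4 + (1/8)*x3*x4*y4^2 + (-1/4)*x3*x4*y2*y4 + (1/8)*x3*x4*y2^2 + (1/8)*x3*x4^3 + (-1/16)*x3^2*y4^2 + (1/8)*x3^2*y2*y4 + (-1/16)*x3^2*y2^2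 + (-1/16)*x3^2*x4^2 + (1/8)*x2*x4*y4^2 + (-1/4)*x2*x4*y3*y4 + (1/8)*x2*x4*y3^2 + (1/8)*x2*x4^3 + (-1/4)*x2*x3*x4^2 + (1/8)*x2*x3^2*x4 + (-1/16)*x2^2*y4^2 + (1/8)*x2^2*y3*y4 + (-1/16)*x2^2*y3^2 + (-1/16)*x2^2*x4^2 + (1/8)*x2^2*x3*x4 + (-1/16)*x2^2*x3^2 + (1/8)*r4^2*y4^2 + (-1/8)*r4^2*y3*y4 + (-1/8)*r4^2*y2*y4 + (1/8)*r4^2*y2*y3 + (1/8)*r4^2*x4^2 + (-1/8)*r4^2*x3*x4 + (-1/8)*r4^2*x2*x4 + (1/8)*r4^2*x2*x3 + (-1/16)*r4^4 + (1/16)*r3^2*y4^2 + (-1/8)*r3^2*y2*y4 + (1/16)*r3^2*y2^2 + (1/16)*r3^2*x4^2 + (-1/8)*r3^2*x2*x4 + (1/16)*r3^2*x2^2 + (-1/8)*r2*r3*r4^2 + (1/16)*r2^2*y4^2 + (-1/8)*r2^2*y3*y4 + (1/16)*r2^2*y3^2 + (1/16)*r2^2*x4^2 + (-1/8)*r2^2*x3*x4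 + (1/16)*r2^2*x3^2 + (-1/16)*r2^2*r3^2 + (1/4)*r1*r4*y4^2 + (-1/4)*r1*r4*y3*y4 + (-1/4)*r1*r4*y2*y4 + (1/4)*r1*r4*y2*y3 + (1/4)*r1*r4*x4^2 + (-1/4)*r1*r4*x3*x4 + (-1/4)*r1*r4*x2*x4 + (1/4)*r1*r4*x2*x3 + (-1/4)*r1*r4^3 + (1/8)*r1*r3*y4^2 + (-1/4)*r1*r3*y2*y4 + (1/8)*r1*r3*y2^2 + (1/8)*r1*r3*x4^2 + (-1/4)*r1*r3*x2*x4 + (1/8)*r1*r3*x2^2 + (1/8)*r1*r3*r4^2 + (1/8)*r1*r2*y4^2 + (-1/4)*r1*r2*y3*y4 + (1/8)*r1*r2*y3^2 + (1/8)*r1*r2*x4^2 + (-1/4)*r1*r2*x3*x4 + (1/8)*r1*r2*x3^2 + (1/8)*r1*r2*r4^2 + (-1/4)*r1*r2*r3*r4 + (-1/8)*r1*r2*r3^2 + (-1/8)*r1*r2^2*r3 + (1/4)*r1^2*y4^2 + (-1/4)*r1^2*y3*y4 + (1/16)*r1^2*y3^2 + (-1/4)*r1^2*y2*y4 + (1/8)*r1^2*y2*y3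 + (1/16)*r1^2*y2^2 + (1/4)*r1^2*x4^2 + (-1/4)*r1^2*x3*x4 + (1/16)*r1^2*x3^2 + (-1/4)*r1^2*x2*x4 + (1/8)*r1^2*x2*x3 + (1/16)*r1^2*x2^2 + (-1/4)*r1^2*r4^2 + (1/4)*r1^2*r3*r4 + (-1/16)*r1^2*r3^2 + (1/4)*r1^2*r2*r4 + (-3/8)*r1^2*r2*r3 + (-1/16)*r1^2*r2^2) * h23 + ((-1/16)*r3^2*y4^2 + (1/8)*r3^2*y2*y4 + (-1/16)*r3^2*y2^2 + (-1/16)*r3^2*x4^2 + (1/8)*r3^2*x2*x4 + (-1/16)*r3^2*x2^2 + (1/16)*r3^2*r4^2 + (-1/8)*r2*r3*y4^2 + (1/4)*r2*r3*y3*y4 + (-1/8)*r2*r3*y3^2 + (-1/8)*r2*r3*x4^2 + (1/4)*r2*r3*x3*x4 + (-1/8)*r2*r3*x3^2 + (1/8)*r2*r3*r4^2 + (-1/8)*r2*r3^2*r4 + (1/8)*r2*r3^3 + (1/16)*r2^2*r3^2 + (-1/4)*r1*r3*y3*y4 + (1/8)*r1*r3*y3^2 + (1/4)*r1*r3*y2*y4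 + (-1/8)*r1*r3*y2^2 + (-1/4)*r1*r3*x3*x4 + (1/8)*r1*r3*x3^2 + (1/4)*r1*r3*x2*x4 + (-1/8)*r1*r3*x2^2 + (1/4)*r1*r3^2*r4 + (-1/8)*r1*r3^3 + (1/8)*r1*r2*y4^2 + (-1/4)*r1*r2*y3*y4 + (1/8)*r1*r2*y3^2 + (1/8)*r1*r2*x4^2 + (-1/4)*r1*r2*x3*x4 + (1/8)*r1*r2*x3^2 + (-1/8)*r1*r2*r4^2 + (3/8)*r1*r2*r3^2 + (1/8)*r1*r2^2*r3 + (1/16)*r1^2*y4^2 + (-1/4)*r1^2*y3*y4 + (1/8)*r1^2*y3^2 + (1/8)*r1^2*y2*y4 + (-1/16)*r1^2*y2^2 + (1/16)*r1^2*x4^2 + (-1/4)*r1^2*x3*x4 + (1/8)*r1^2*x3^2 + (1/8)*r1^2*x2*x4 + (-1/16)*r1^2*x2^2 + (-1/16)*r1^2*r4^2 + (1/4)*r1^2*r3*r4 + (-1/8)*r1^2*r3^2 + (-3/8)*r1^2*r2*r4 + (1/2)*r1^2*r2*r3 + (1/16)*r1^2*r2^2) * h24 + ((-1/16)*r2^2*y4^2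 + (1/8)*r2^2*y3*y4 + (-1/16)*r2^2*y3^2 + (-1/16)*r2^2*x4^2 + (1/8)*r2^2*x3*x4 + (-1/16)*r2^2*x3^2 + (1/16)*r2^2*r4^2 + (-3/8)*r2^2*r3*r4 + (1/16)*r2^2*r3^2 + (-1/8)*r1*r2*y4^2 + (1/4)*r1*r2*y3*y4 + (-1/8)*r1*r2*y3^2 + (-1/8)*r1*r2*x4^2 + (1/4)*r1*r2*x3*x4 + (-1/8)*r1*r2*x3^2 + (1/8)*r1*r2*r4^2 + (1/4)*r1*r2*r3*r4 + (1/8)*r1*r2*r3^2 + (1/2)*r1*r2^2*r4 + (1/2)*r1*r2^2*r3 + (-1/16)*r1^2*y4^2 + (1/8)*r1^2*y3*y4 + (-1/16)*r1^2*y3^2 + (-1/16)*r1^2*x4^2 + (1/8)*r1^2*x3*x4 + (-1/16)*r1^2*x3^2 + (1/16)*r1^2*r4^2 + (-3/8)*r1^2*r3*r4 + (1/16)*r1^2*r3^2 + (1/2)*r1^2*r2*r4 + (1/2)*r1^2*r2*r3) * h34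

/-- Descartes circle theorem: if four circles in the complex plane, with centres `z i`
and radii `r i > 0`, are pairwise externally tangent, then their curvatures `1 / r i`
satisfy the Descartes circle relation. -/
theorem descartes_circle_theorem (z : Fin 4 → ℂ) (r : Fin 4 → ℝ)
    (hr : ∀ i, 0 < r i)
    (htangent : ∀ i j, i ≠ j → ‖z i - z j‖ = r i + r j) :
    2 * ((1 / r 0) ^ 2 + (1 / r 1) ^ 2 + (1 / r 2) ^ 2 + (1 / r 3) ^ 2) =
      (1 / r 0 + 1 / r 1 + 1 / r 2 + 1 / r 3) ^ 2 := by
  have key : ∀ i j : Fin 4, i ≠ j →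
      ((z i).re - (z j).re)^2 + ((z i).im - (z j).im)^2 = (r i + r j)^2 := by
    intro i j hij
    have h := htangent i j hij
    have h2 : ‖z i - z j‖ ^ 2 = (r i + r j) ^ 2 := by rw [h]
    rw [Complex.sq_norm, Complex.normSq_apply, Complex.sub_re, Complex.sub_im] at h2
    linarith [h2]
  have hpoly := descartes_poly (z 0).re (z 1).re (z 2).re (z 3).re
    (z 0).im (z 1).im (z 2).im (z 3).im (r 0) (r 1) (r 2) (r 3)
    (key 0 1 (by decide)) (key 0 2 (by decide)) (key 0 3 (by decide))
    (key 1 2 (by decide)) (key 1 3 (by decide)) (key 2 3 (by decide))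
  have h0 := (hr 0).ne'
  have h1 := (hr 1).ne'
  have h2 := (hr 2).ne'
  have h3 := (hr 3).ne'
  field_simp
  linear_combination hpoly
end

section
/- Let α, β, γ, δ ∈ ℂ with |αδ − βγ| = 1, and suppose b := 2·Im(β·conj(δ)) is nonzero. Then β·t + δ ≠ 0 for every real t, and the image of the real line under the Möbius transformation t ↦ (α·t + γ)/(β·t + δ) is exactly the circle of centre c := i·(γ·conj(β) − α·conj(δ))/b and radius 1/|b| with the single point α/β removed; that is, { (α·t + γ)/(β·t + δ) : t ∈ ℝ } = { w ∈ ℂ : |w − c| = 1/|b| } \ {α/β}. In particular the circle has curvature of absolute value |b| = |2·Im(β·conj(δ))| and curvature-times-centre of absolute value |i·(γ·conj(β) − α·conj(δ))|. -/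
open Complex

/-- The image of the real line under a unit-determinant Möbius transformation with
nonzero curvature `b = 2 Im(β conj δ)` is the circle of centre
`c = i(γ conj β − α conj δ)/b` and radius `1/|b|`, minus the point `α/β`;
moreover the denominator never vanishes on `ℝ`, and the curvature-times-centre
equals `i(γ conj β − α conj δ)`. -/
theorem mobius_image_of_real_line (α β γ δ : ℂ)
    (hdet : ‖α * δ - β * γ‖ = 1)
    (b : ℝ) (hb : b = 2 * (β * (starRingEnd ℂ) δ).im) (hb0 : b ≠ 0)
    (c : ℂ) (hc : c = Complex.I * (γ * (starRingEnd ℂ) β - α * (starRingEnd ℂ) δ) / b) :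
    (∀ t : ℝ, β * t + δ ≠ 0) ∧
    {w : ℂ | ∃ t : ℝ, (α * t + γ) / (β * t + δ) = w} =
      {w : ℂ | ‖w - c‖ = 1 / |b|} \ {α / β} ∧
    (b : ℂ) * c = Complex.I * (γ * (starRingEnd ℂ) β - α * (starRingEnd ℂ) δ) := by
  have hbC0 : (b : ℂ) ≠ 0 := Complex.ofReal_ne_zero.mpr hb0
  have hβ : β ≠ 0 := by
    intro h
    apply hb0
    rw [hb, h]
    simp
  have hD0 : α * δ - β * γ ≠ 0 := by
    intro h
    rw [h] at hdet
    simp at hdet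
  -- the complex form of b
  have hIb : (b : ℂ) * Complex.I = β * (starRingEnd ℂ) δ - (starRingEnd ℂ) β * δ := by
    have h := Complex.sub_conj (β * (starRingEnd ℂ) δ)
    simp only [map_mul, Complex.conj_conj] at h
    push_cast at h
    rw [hb]
    push_cast
    linear_combination -h
  have hcb : c * (b : ℂ) = Complex.I * (γ * (starRingEnd ℂ) β - α * (starRingEnd ℂ) δ) := by
    rw [hc]; field_simp
  -- part 1
  have part1 : ∀ t : ℝ, β * t + δ ≠ 0 := by
    intro t h
    apply hb0
    have hδ : δ = -(β * (t : ℂ)) := by linear_combination h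
    rw [hb, hδ]
    simp only [map_neg, map_mul, Complex.conj_ofReal]
    have : β * -((starRingEnd ℂ) β * (t : ℂ)) = -((Complex.normSq β : ℂ) * (t : ℂ)) := by
      rw [← Complex.mul_conj]; ring
    rw [this]
    simp
  refine ⟨part1, ?_, by rw [hc]; field_simp⟩
  have hDD : (α * δ - β * γ) *
      ((starRingEnd ℂ) α * (starRingEnd ℂ) δ - (starRingEnd ℂ) β * (starRingEnd ℂ) γ) = 1 := by
    have h := Complex.mul_conj (α * δ - β * γ)
    rw [← Complex.sq_norm, hdet] at h
    simp only [map_sub, map_mul] at h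
    rw [h]; norm_num
  ext w
  simp only [Set.mem_setOf_eq, Set.mem_diff, Set.mem_singleton_iff]
  constructor
  · rintro ⟨t, rfl⟩
    have hu : β * (t : ℂ) + δ ≠ 0 := part1 t
    have hcu : (starRingEnd ℂ) (β * (t : ℂ) + δ) = (starRingEnd ℂ) β * (t : ℂ) + (starRingEnd ℂ) δ := by
      simp [map_add, map_mul, Complex.conj_ofReal]
    constructor
    · -- abs
      have h5 : ((α * (t : ℂ) + γ) - c * (β * (t : ℂ) + δ)) * (b : ℂ) =
          Complex.I * (α * δ - β * γ) * ((starRingEnd ℂ) β * (t : ℂ) + (starRingEnd ℂ) δ) := by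
        linear_combination (-(β * (t : ℂ) + δ)) * hcb + (-Complex.I * (α * (t : ℂ) + γ)) * hIb +
          (Complex.I * ((γ * (starRingEnd ℂ) β - α * (starRingEnd ℂ) δ) * (β * (t : ℂ) + δ) +
            (α * δ - β * γ) * ((starRingEnd ℂ) β * (t : ℂ) + (starRingEnd ℂ) δ)) +
           ((α * (t : ℂ) + γ) * (b : ℂ) - Complex.I * (γ * (starRingEnd ℂ) β - α * (starRingEnd ℂ) δ) * (β * (t : ℂ) + δ) -
            Complex.I * (α * δ - β * γ) * ((starRingEnd ℂ) β * (t : ℂ) + (starRingEnd ℂ) δ))) * Complex.I_mul_I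
      have h6 : (α * (t : ℂ) + γ) / (β * (t : ℂ) + δ) - c =
          ((α * (t : ℂ) + γ) - c * (β * (t : ℂ) + δ)) / (β * (t : ℂ) + δ) := by
        rw [sub_div, mul_div_assoc, div_self hu, mul_one]
      have h7 := congrArg (‖·‖) h5
      rw [norm_mul, norm_mul, norm_mul, Complex.norm_real, Real.norm_eq_abs, Complex.norm_I, hdet, ← hcu,
        Complex.norm_conj, one_mul, one_mul] at h7
      have habsu : ‖β * (t : ℂ) + δ‖ ≠ 0 := by
        simpa using hu
      have habsb : |b| ≠ 0 := abs_ne_zero.mpr hb0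
      rw [h6, norm_div, div_eq_div_iff habsu habsb]
      linear_combination h7
    · -- ≠ α/β
      intro h
      rw [div_eq_div_iff hu hβ] at h
      apply hD0
      linear_combination -h
  · rintro ⟨hw, hne⟩
    have hA : α - β * w ≠ 0 := by
      intro h
      apply hne
      rw [eq_div_iff hβ]
      linear_combination -h
    have hE0 : (w - c) * ((starRingEnd ℂ) w - (starRingEnd ℂ) c) * (b : ℂ) ^ 2 = 1 := by
      have h2 := Complex.mul_conj (w - c)
      rw [← Complex.sq_norm, hw] at h2
      simp only [map_sub] at h2
      rw [h2]
      have hbb : ((|b| : ℝ) : ℂ) ^ 2 = ((b : ℝ) : ℂ) ^ 2 := by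
        norm_cast
        exact _root_.sq_abs b
      push_cast
      rw [div_pow, one_pow, hbb]
      field_simp
    have hccb : (starRingEnd ℂ) c * (b : ℂ) =
        -(Complex.I * ((starRingEnd ℂ) γ * β - (starRingEnd ℂ) α * δ)) := by
      have h := congrArg (starRingEnd ℂ) hcb
      simp only [map_mul, map_sub, Complex.conj_conj, Complex.conj_I, Complex.conj_ofReal] at h
      linear_combination h
    set a1 := (starRingEnd ℂ) α with ha1
    set B1 := (starRingEnd ℂ) β with hB1
    set g1 := (starRingEnd ℂ) γ with hg1
    set d1 := (starRingEnd ℂ) δ with hd1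
    set w1 := (starRingEnd ℂ) w with hw1
    have hE1 : ((b : ℂ) * w - Complex.I * (γ * B1 - α * d1)) * ((b : ℂ) * w1 + Complex.I * (g1 * β - a1 * δ)) = 1 := by
      linear_combination hE0 + ((b : ℂ) * w1 + Complex.I * (g1 * β - a1 * δ)) * hcb +
        ((b : ℂ) * w - c * (b : ℂ)) * hccb
    have hGmul : (Complex.I * (b : ℂ)) * ((δ * w - γ) * (a1 - B1 * w1)) =
        (Complex.I * (b : ℂ)) * ((d1 * w1 - g1) * (α - β * w)) := by
      linear_combination hDD - hE1 +
        (-((β * d1 - B1 * δ) + (b : ℂ) * Complex.I) * w * w1 + w * (g1 * β - a1 * δ) -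
          w1 * (γ * B1 - α * d1) +
          ((δ * w - γ) * (a1 - B1 * w1) - (d1 * w1 - g1) * (α - β * w))) * hIb +
        ((b : ℂ) ^ 2 * w * w1 +
          (δ * γ * a1 * B1 - δ * a1 * α * d1 - γ * B1 * g1 * β + α * d1 * g1 * β)) *
          Complex.I_mul_I
    have hIbne : Complex.I * (b : ℂ) ≠ 0 := mul_ne_zero Complex.I_ne_zero hbC0
    have hG : (δ * w - γ) * (a1 - B1 * w1) = (d1 * w1 - g1) * (α - β * w) :=
      mul_left_cancel₀ hIbne hGmul
    set T := (δ * w - γ) / (α - β * w) with hT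
    have hA1 : a1 - B1 * w1 ≠ 0 := by
      have e : a1 - B1 * w1 = (starRingEnd ℂ) (α - β * w) := by
        rw [map_sub, map_mul, ← ha1, ← hB1, ← hw1]
      rw [e]
      exact fun h => hA (by simpa using congrArg (starRingEnd ℂ) h)
    have hTconj : (starRingEnd ℂ) T = T := by
      rw [hT, map_div₀]
      simp only [map_sub, map_mul, Complex.conj_conj]
      rw [div_eq_div_iff hA1 hA]
      linear_combination -hG
    have hTre : ((T.re : ℝ) : ℂ) = T := Complex.conj_eq_iff_re.mp hTconj
    refine ⟨T.re, ?_⟩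
    rw [hTre]
    have hden : β * T + δ ≠ 0 := by
      intro h
      apply hD0
      have h2 : (β * T + δ) * (α - β * w) = α * δ - β * γ := by
        have hA' : α - w * β ≠ 0 := by rwa [mul_comm w β]
        rw [hT]; field_simp; ring
      rw [h, zero_mul] at h2
      exact h2.symm
    rw [div_eq_iff hden, hT]
    have hA' : α - w * β ≠ 0 := by rwa [mul_comm w β]
    field_simp
    ring
end

section
/- Let α, β, γ, δ ∈ ℂ with |αδ − βγ| = 1. Set b := 2·Im(β·conj(δ)) (the curvature), b' := 2·Im(α·conj(γ)) (the co-curvature), and z := i·(γ·conj(β) − α·conj(δ)) (the curvature-centre). Then b'·b = |z|² − 1. -/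
/-- For a unit-determinant Möbius transformation, the curvature `b`, co-curvature `b'`
and curvature-centre `z` of the image of the real line satisfy `b' b = |z|² − 1`. -/
theorem cocurvature_relation (α β γ δ : ℂ)
    (hdet : ‖α * δ - β * γ‖ = 1)
    (b b' : ℝ) (z : ℂ)
    (hb : b = 2 * (β * (starRingEnd ℂ) δ).im)
    (hb' : b' = 2 * (α * (starRingEnd ℂ) γ).im)
    (hz : z = Complex.I * (γ * (starRingEnd ℂ) β - α * (starRingEnd ℂ) δ)) :
    b' * b = ‖z‖ ^ 2 - 1 := by
  have h : Complex.normSq (α * δ - β * γ) = 1 := by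
    rw [← Complex.sq_norm, hdet]; norm_num
  rw [Complex.sq_norm]
  subst hb hb' hz
  simp only [Complex.normSq_apply, Complex.mul_im, Complex.mul_re, Complex.sub_re,
    Complex.sub_im, Complex.conj_re, Complex.conj_im, Complex.I_re, Complex.I_im] at h ⊢
  ring_nf at h ⊢
  linarith [h]
end

section
/- Let α, β, γ, δ be Gaussian integers (elements of ℤ[i]) and set z := i·(γ·conj(β) − α·conj(δ)) ∈ ℤ[i]. If αδ − βγ = 1 or αδ − βγ = −1, then the real part of z is even and the imaginary part of z is odd. If αδ − βγ = i or αδ − βγ = −i, then the real part of z is odd and the imaginary part of z is even. -/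
open Zsqrtd

/-- Parity of the curvature-centre `z = i(γ conj β − α conj δ)` of a Gaussian circle:
if the determinant `αδ − βγ` is `±1` then `Re z` is even and `Im z` is odd;
if the determinant is `±i` then `Re z` is odd and `Im z` is even. -/
theorem curvature_centre_parity (α β γ δ : GaussianInt)
    (z : GaussianInt)
    (hz : z = sqrtd * (γ * star β - α * star δ)) :
    ((α * δ - β * γ = 1 ∨ α * δ - β * γ = -1) → Even z.re ∧ Odd z.im) ∧
    ((α * δ - β * γ = sqrtd ∨ α * δ - β * γ = -sqrtd) → Odd z.re ∧ Even z.im) := by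
  subst hz
  simp only [Zsqrtd.ext_iff, Zsqrtd.re_mul, Zsqrtd.im_mul, Zsqrtd.re_sub, Zsqrtd.im_sub,
    Zsqrtd.re_star, Zsqrtd.im_star, Zsqrtd.re_sqrtd, Zsqrtd.im_sqrtd, Zsqrtd.re_one,
    Zsqrtd.im_one, Zsqrtd.re_neg, Zsqrtd.im_neg, Int.even_iff, Int.odd_iff] at *
  ring_nf
  generalize α.re * δ.re = p1
  generalize α.im * δ.im = p2
  generalize β.re * γ.re = p3
  generalize β.im * γ.im = p4
  generalize α.re * δ.im = p5
  generalize δ.re * α.im = p6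
  generalize β.re * γ.im = p7
  generalize γ.re * β.im = p8
  omega
end

section
/- Let u, v, w ∈ ℤ[i]² be such that each of the pairs (u,v), (v,w), and (w,u) is a ℤ[i]-basis of ℤ[i]² (i.e. each corresponding 2×2 matrix over ℤ[i] has determinant a unit). Then there exist units ε₁, ε₂, ε₃ of ℤ[i] such that ε₁·u + ε₂·v + ε₃·w = 0. -/
/-- If each of the pairs `(u,v)`, `(v,w)`, `(w,u)` is a `ℤ[i]`-basis of `ℤ[i]²`, then
there are units `ε₁, ε₂, ε₃` of `ℤ[i]` with `ε₁ u + ε₂ v + ε₃ w = 0`. -/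
theorem superbasis_unit_relation (u v w : Fin 2 → GaussianInt)
    (huv : IsUnit (Matrix.det !![u 0, v 0; u 1, v 1]))
    (hvw : IsUnit (Matrix.det !![v 0, w 0; v 1, w 1]))
    (hwu : IsUnit (Matrix.det !![w 0, u 0; w 1, u 1])) :
    ∃ ε₁ ε₂ ε₃ : GaussianInt, IsUnit ε₁ ∧ IsUnit ε₂ ∧ IsUnit ε₃ ∧
      ε₁ • u + ε₂ • v + ε₃ • w = 0 := by
  simp only [Matrix.det_fin_two_of] at huv hvw hwu
  refine ⟨v 0 * w 1 - w 0 * v 1, w 0 * u 1 - u 0 * w 1, u 0 * v 1 - v 0 * u 1,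
    hvw, hwu, huv, ?_⟩
  funext i
  fin_cases i <;> simp [smul_eq_mul] <;> ring
end
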